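/- Let A = Aᵀ ∈ ℝ^{3×3} with W = tr(A)I − A positive definite. A rotation R ∈ SO(3) satisfies P_a(AR) = 0 (i.e. AR is symmetric) if and only if R = I or R = R_a(π, v) for some unit eigenvector v of A. -/

import Mathlib

open Matrix Real

noncomputable section

/-- The skew-symmetric cross-product matrix `[u]ₓ`. -/
def skew (u : Fin 3 → ℝ) : Matrix (Fin 3) (Fin 3) ℝ :=
  !![0, -u 2, u 1; u 2, 0, -u 0; -u 1, u 0, 0]

/-- Inverse of `skew` on skew-symmetric matrices. -/
def vex (M : Matrix (Fin 3) (Fin 3) ℝ) : Fin 3 → ℝ :=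
  ![M 2 1, M 0 2, M 1 0]

/-- `ψ(A) = vex((A - Aᵀ)/2)`. -/
def psiMap (M : Matrix (Fin 3) (Fin 3) ℝ) : Fin 3 → ℝ :=
  vex ((1 / 2 : ℝ) • (M - Mᵀ))

/-- Cross product on `ℝ³`. -/
def cross3 (x y : Fin 3 → ℝ) : Fin 3 → ℝ :=
  ![x 1 * y 2 - x 2 * y 1, x 2 * y 0 - x 0 * y 2, x 0 * y 1 - x 1 * y 0]

lemma skew_mul_skew (v : Fin 3 → ℝ) :
    skew v * skew v = Matrix.of (fun i j => v i * v j) - (v ⬝ᵥ v) • 1 := by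
  ext i j
  fin_cases i <;> fin_cases j <;>
    simp [skew, Matrix.mul_apply, dotProduct, Fin.sum_univ_three, Matrix.one_apply] <;> ring

lemma cross3_mulVec (M : Matrix (Fin 3) (Fin 3) ℝ) (a b : Fin 3 → ℝ) :
    cross3 (M *ᵥ a) (M *ᵥ b) = (M.adjugate)ᵀ *ᵥ cross3 a b := by
  funext i
  fin_cases i <;>
    simp [cross3, Matrix.mulVec, dotProduct, Fin.sum_univ_three, Matrix.adjugate_fin_three,
      Matrix.transpose_apply] <;> ring

lemma parallel3 (q c : Fin 3 → ℝ) (h : cross3 q c = 0) :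
    (q ⬝ᵥ q) • c = (q ⬝ᵥ c) • q := by
  have key : (q ⬝ᵥ q) • c - (q ⬝ᵥ c) • q = cross3 (cross3 q c) q := by
    funext i
    fin_cases i <;> simp [cross3, dotProduct, Fin.sum_univ_three] <;> ring
  rw [h] at key
  have : cross3 0 q = 0 := by funext i; fin_cases i <;> simp [cross3]
  rw [this] at key
  exact sub_eq_zero.mp key

lemma adj_eq_transpose (R : Matrix (Fin 3) (Fin 3) ℝ) (h1 : R * Rᵀ = 1) (h2 : R.det = 1) :
    R.adjugate = Rᵀ := by
  have h1' : Rᵀ * R = 1 := mul_eq_one_comm.mp h1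
  calc R.adjugate = (Rᵀ * R) * R.adjugate := by rw [h1', one_mul]
    _ = Rᵀ * (R * R.adjugate) := by rw [mul_assoc]
    _ = Rᵀ := by rw [Matrix.mul_adjugate, h2, one_smul, mul_one]

lemma cross3_so3 (R : Matrix (Fin 3) (Fin 3) ℝ) (h1 : R * Rᵀ = 1) (h2 : R.det = 1)
    (a b : Fin 3 → ℝ) : cross3 (R *ᵥ a) (R *ᵥ b) = R *ᵥ cross3 a b := by
  rw [cross3_mulVec, adj_eq_transpose R h1 h2, Matrix.transpose_transpose]

lemma eq_one_of_fixed (R : Matrix (Fin 3) (Fin 3) ℝ) (h1 : R * Rᵀ = 1) (h2 : R.det = 1)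
    {x y : Fin 3 → ℝ} (hx : R *ᵥ x = x) (hy : R *ᵥ y = y) (hz : cross3 x y ≠ 0) :
    R = 1 := by
  have hzfix : R *ᵥ cross3 x y = cross3 x y := by
    have h := cross3_so3 R h1 h2 x y
    rw [hx, hy] at h
    exact h.symm
  set z := cross3 x y with hzdef
  set B : Matrix (Fin 3) (Fin 3) ℝ := Matrix.of (fun i j => ![x, y, z] j i) with hB
  have hdetB : B.det = z ⬝ᵥ z := by
    simp [hB, Matrix.det_fin_three, hzdef, cross3, dotProduct, Fin.sum_univ_three]
    ring
  have hdetB0 : B.det ≠ 0 := by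
    rw [hdetB]; exact fun h => hz (dotProduct_self_eq_zero.mp h)
  have hRB : R * B = B := by
    ext i j
    fin_cases j
    · simpa [hB, Matrix.mul_apply, Matrix.mulVec, dotProduct, Fin.sum_univ_three]
        using congrFun hx i
    · simpa [hB, Matrix.mul_apply, Matrix.mulVec, dotProduct, Fin.sum_univ_three]
        using congrFun hy i
    · simpa [hB, Matrix.mul_apply, Matrix.mulVec, dotProduct, Fin.sum_univ_three]
        using congrFun hzfix i
  have hBinv := Matrix.mul_nonsing_inv B (isUnit_iff_ne_zero.mpr hdetB0)
  calc R = R * (B * B⁻¹) := by rw [hBinv, mul_one]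
    _ = (R * B) * B⁻¹ := by rw [mul_assoc]
    _ = B * B⁻¹ := by rw [hRB]
    _ = 1 := hBinv

lemma skew_transpose (a : Fin 3 → ℝ) : (skew a)ᵀ = -skew a := by
  ext i j
  fin_cases i <;> fin_cases j <;> simp [skew, Matrix.transpose_apply]

lemma pairing (a b : Fin 3 → ℝ) : ((skew a)ᵀ * skew b).trace = 2 * (a ⬝ᵥ b) := by
  rw [skew_transpose]
  simp [Matrix.trace, skew, Matrix.mul_apply, Matrix.diag, Fin.sum_univ_three, dotProduct]
  ring

lemma skew_identity (M : Matrix (Fin 3) (Fin 3) ℝ) (x : Fin 3 → ℝ) :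
    M * skew x + skew x * Mᵀ = skew ((M.trace • (1 : Matrix (Fin 3) (Fin 3) ℝ) - Mᵀ) *ᵥ x) := by
  ext i j
  fin_cases i <;> fin_cases j <;>
    simp [skew, Matrix.mul_apply, Matrix.mulVec, Matrix.vecMul, dotProduct, Matrix.trace,
      Matrix.diag, Matrix.one_apply, Fin.sum_univ_three, Matrix.transpose_apply] <;> ring

lemma skew_of_antisym {M : Matrix (Fin 3) (Fin 3) ℝ} (h : Mᵀ = -M) :
    skew ![M 2 1, M 0 2, M 1 0] = M := by
  have h' : ∀ i j : Fin 3, M j i = -M i j := by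
    intro i j
    have := congrFun (congrFun h i) j
    simpa [Matrix.transpose_apply] using this
  ext i j
  fin_cases i <;> fin_cases j <;>
    simp [skew] <;>
    linarith [h' 0 0, h' 1 1, h' 2 2, h' 0 1, h' 0 2, h' 1 2]

/-- Rodrigues rotation. -/
def Ra (θ : ℝ) (u : Fin 3 → ℝ) : Matrix (Fin 3) (Fin 3) ℝ :=
  1 + Real.sin θ • skew u + (1 - Real.cos θ) • (skew u * skew u)

lemma Ra_pi (u : Fin 3 → ℝ) (hu : u ⬝ᵥ u = 1) :
    Ra Real.pi u = (2:ℝ) • Matrix.of (fun i j => u i * u j) - 1 := by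
  rw [Ra, Real.sin_pi, Real.cos_pi, skew_mul_skew, hu]
  module

lemma backward_dir (A : Matrix (Fin 3) (Fin 3) ℝ) (hA : Aᵀ = A) (v : Fin 3 → ℝ) (lam : ℝ)
    (hv : v ⬝ᵥ v = 1) (heig : A *ᵥ v = lam • v) :
    (1 / 2 : ℝ) • (A * Ra Real.pi v - (A * Ra Real.pi v)ᵀ) = 0 := by
  have hAX : A * Matrix.of (fun i j => v i * v j) = Matrix.of (fun i j => lam * (v i * v j)) := by
    ext i j
    have h := congrFun heig i
    simp [Matrix.mul_apply, Matrix.mulVec, dotProduct, Fin.sum_univ_three, Pi.smul_apply,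
      smul_eq_mul] at h ⊢
    linear_combination v j * h
  have key : A * ((2:ℝ) • Matrix.of (fun i j => v i * v j) - 1)
      = (2:ℝ) • Matrix.of (fun i j => lam * (v i * v j)) - A := by
    rw [mul_sub, mul_one, mul_smul_comm, hAX]
  rw [Ra_pi v hv, key]
  ext i j
  have hsym : A j i = A i j := congrFun (congrFun hA i) j
  simp [Matrix.sub_apply, Matrix.smul_apply, Matrix.transpose_apply, Matrix.of_apply, hsym]
  ring

/-- Membership in SO(3). -/
def SO3 (R : Matrix (Fin 3) (Fin 3) ℝ) : Prop :=
  R * Rᵀ = 1 ∧ R.det = 1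

/-- Critical points of `V_A`: `P_a(AR) = 0` iff `R = I` or `R = R_a(π,v)` for a
unit eigenvector `v` of `A`. -/
theorem stmt_6 (A : Matrix (Fin 3) (Fin 3) ℝ) (hA : Aᵀ = A)
    (hW : ∀ x : Fin 3 → ℝ, x ≠ 0 →
      0 < x ⬝ᵥ ((A.trace • (1 : Matrix (Fin 3) (Fin 3) ℝ) - A) *ᵥ x))
    (R : Matrix (Fin 3) (Fin 3) ℝ) (hR : SO3 R) :
    (1 / 2 : ℝ) • (A * R - (A * R)ᵀ) = 0 ↔
      R = 1 ∨ ∃ (v : Fin 3 → ℝ) (lam : ℝ), v ⬝ᵥ v = 1 ∧ A *ᵥ v = lam • v ∧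
        R = Ra Real.pi v := by
  constructor
  · intro h
    by_cases hR1 : R = 1
    · exact Or.inl hR1
    right
    obtain ⟨hRO, hdet⟩ := hR
    have hRO' : Rᵀ * R = 1 := mul_eq_one_comm.mp hRO
    have hAR : A * R = Rᵀ * A := by
      have h0 : A * R - (A * R)ᵀ = 0 := by
        have h2 := congrArg (fun M => (2:ℝ) • M) h
        simpa [smul_smul] using h2
      have h3 : A * R = (A * R)ᵀ := sub_eq_zero.mp h0
      rw [h3, Matrix.transpose_mul, hA]
    set K := R - Rᵀ with hK
    have hKanti : Kᵀ = -K := by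
      rw [hK, Matrix.transpose_sub, Matrix.transpose_transpose, neg_sub]
    set w : Fin 3 → ℝ := ![K 2 1, K 0 2, K 1 0] with hw
    have hKskew : skew w = K := skew_of_antisym hKanti
    set P := R + Rᵀ with hP
    have e1 : A * K + K * A = P * A - A * P := by
      have l : A * (P + K) = (P - K) * A := by
        have hPK : P + K = R + R := by rw [hP, hK]; abel
        have hPK' : P - K = Rᵀ + Rᵀ := by rw [hP, hK]; abel
        rw [hPK, hPK', mul_add, add_mul, hAR]
      rw [mul_add, sub_mul] at l
      have e2 : A * K + K * A - (P * A - A * P) = (A * P + A * K) - (P * A - K * A) := by abel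
      rw [l, sub_self] at e2
      exact sub_eq_zero.mp e2
    have hKP : K * P = P * K := by
      have l1 : K * P = R * R - Rᵀ * Rᵀ := by
        rw [hK, hP, sub_mul, mul_add, mul_add, hRO, hRO']; abel
      have l2 : P * K = R * R - Rᵀ * Rᵀ := by
        rw [hK, hP, add_mul, mul_sub, mul_sub, hRO, hRO']; abel
      rw [l1, l2]
    have hWw : skew ((A.trace • (1 : Matrix (Fin 3) (Fin 3) ℝ) - A) *ᵥ w) = P * A - A * P := by
      have hid := skew_identity A w
      rw [hA] at hid
      rw [← hid, hKskew]
      exact e1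
    have htr0 : (K * (P * A)).trace = (K * (A * P)).trace := by
      rw [← mul_assoc, hKP, mul_assoc, Matrix.trace_mul_comm P (K * A), mul_assoc]
    have hdot : w ⬝ᵥ ((A.trace • (1 : Matrix (Fin 3) (Fin 3) ℝ) - A) *ᵥ w) = 0 := by
      have hp := pairing w ((A.trace • (1 : Matrix (Fin 3) (Fin 3) ℝ) - A) *ᵥ w)
      rw [hWw, hKskew, hKanti] at hp
      rw [neg_mul, Matrix.trace_neg, mul_sub, Matrix.trace_sub, htr0, sub_self, neg_zero] at hp
      linarith
    have hw0 : w = 0 := by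
      by_contra hwne
      have hpos := hW w hwne
      rw [hdot] at hpos
      exact lt_irrefl 0 hpos
    have hK0 : K = 0 := by
      rw [← hKskew, hw0]
      ext i j
      fin_cases i <;> fin_cases j <;>
        simp [skew, Matrix.vecHead, Matrix.vecTail]
    have hRsym : Rᵀ = R := by
      have hsub : R - Rᵀ = 0 := by rw [← hK]; exact hK0
      exact (sub_eq_zero.mp hsub).symm
    have hR2 : R * R = 1 := by
      calc R * R = R * Rᵀ := by rw [hRsym]
        _ = 1 := hRO
    have hARRA : A * R = R * A := by rw [hAR, hRsym]
    set Q : Matrix (Fin 3) (Fin 3) ℝ := (1/2 : ℝ) • (1 + R) with hQ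
    have h2Q : (2:ℝ) • Q = 1 + R := by rw [hQ, smul_smul]; norm_num
    have hQidem : Q * Q = Q := by
      have hsq : (1 + R) * (1 + R) = (2:ℝ) • (1 + R) := by
        simp only [mul_add, add_mul, one_mul, mul_one, hR2, two_smul]
        abel
      rw [hQ, smul_mul_assoc, mul_smul_comm, hsq, smul_smul, smul_smul]
      norm_num
    have hQsym : Qᵀ = Q := by
      rw [hQ, Matrix.transpose_smul, Matrix.transpose_add, Matrix.transpose_one, hRsym]
    have hQS : ∀ i j : Fin 3, Q i j = Q j i := by
      intro i j
      simpa [Matrix.transpose_apply] using congrFun (congrFun hQsym j) i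
    have hRQ : R * Q = Q := by
      have hmul : R * (1 + R) = 1 + R := by rw [mul_add, mul_one, hR2, add_comm]
      rw [hQ, mul_smul_comm, hmul]
    have hAQ : A * Q = Q * A := by
      rw [hQ, mul_smul_comm, smul_mul_assoc, mul_add, add_mul, mul_one, one_mul, hARRA]
    have hQne : Q ≠ 0 := by
      intro h0
      have hRneg : R = -1 := by
        have h1R : (1 : Matrix (Fin 3) (Fin 3) ℝ) + R = 0 := by
          rw [← h2Q, h0, smul_zero]
        exact eq_neg_of_add_eq_zero_right h1R
      rw [hRneg] at hdet
      rw [show ((-1 : Matrix (Fin 3) (Fin 3) ℝ)) = -(1 : Matrix (Fin 3) (Fin 3) ℝ) from rfl,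
        Matrix.det_neg] at hdet
      norm_num at hdet
    obtain ⟨a, m, ham⟩ : ∃ a m, Q a m ≠ 0 := by
      by_contra hc
      push_neg at hc
      exact hQne (by ext i j; simpa using hc i j)
    set q : Fin 3 → ℝ := fun i => Q i m with hq
    have hqne : q ≠ 0 := fun hzero => ham (congrFun hzero a)
    have hfix : ∀ k : Fin 3, R *ᵥ (fun i => Q i k) = fun i => Q i k := by
      intro k
      funext i
      have hik := congrFun (congrFun hRQ i) k
      simpa [Matrix.mul_apply, Matrix.mulVec, dotProduct] using hik
    have hQq : Q *ᵥ q = q := by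
      funext i
      have hik := congrFun (congrFun hQidem i) m
      simpa [Matrix.mul_apply, Matrix.mulVec, dotProduct, hq] using hik
    have hcross : ∀ k : Fin 3, cross3 q (fun i => Q i k) = 0 := by
      intro k
      by_contra hc
      exact hR1 (eq_one_of_fixed R hRO hdet (hfix m) (hfix k) hc)
    set s : ℝ := q ⬝ᵥ q with hs
    have hsne : s ≠ 0 := fun h0 => hqne (dotProduct_self_eq_zero.mp (hs ▸ h0))
    have hsnn : 0 ≤ s := by
      rw [hs]; simp only [dotProduct, Fin.sum_univ_three]
      nlinarith [mul_self_nonneg (q 0), mul_self_nonneg (q 1), mul_self_nonneg (q 2)]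
    have hspos : 0 < s := lt_of_le_of_ne hsnn (Ne.symm hsne)
    have hdotk : ∀ k, q ⬝ᵥ (fun i => Q i k) = q k := by
      intro k
      have h1 := congrFun hQq k
      simp only [Matrix.mulVec, dotProduct, Fin.sum_univ_three, hq] at h1 ⊢
      rw [hQS 0 k, hQS 1 k, hQS 2 k]
      linarith [h1]
    have hQentry : ∀ i k, Q i k = q i * q k / s := by
      intro i k
      have hpar := parallel3 q (fun i => Q i k) (hcross k)
      rw [hdotk k] at hpar
      have hi := congrFun hpar i
      simp only [Pi.smul_apply, smul_eq_mul, ← hs] at hi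
      field_simp
      linarith [hi]
    set u : Fin 3 → ℝ := fun i => q i / Real.sqrt s with hu
    have hsqrtpos : 0 < Real.sqrt s := Real.sqrt_pos.mpr hspos
    have hss : Real.sqrt s * Real.sqrt s = s := Real.mul_self_sqrt hspos.le
    have hsum : q 0 * q 0 + q 1 * q 1 + q 2 * q 2 = s := by
      rw [hs]; simp [dotProduct, Fin.sum_univ_three]
    have huu : u ⬝ᵥ u = 1 := by
      simp only [hu, dotProduct, Fin.sum_univ_three]
      field_simp
      linear_combination hsum - hss
    have hQu : ∀ i k, Q i k = u i * u k := by
      intro i k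
      rw [hQentry i k]
      simp only [hu]
      field_simp
      try linear_combination (q i * q k) * hss
      try ring
    have hQx : ∀ x : Fin 3 → ℝ, Q *ᵥ x = (u ⬝ᵥ x) • u := by
      intro x
      funext i
      simp only [Matrix.mulVec, dotProduct, Fin.sum_univ_three, Pi.smul_apply, smul_eq_mul,
        hQu]
      ring
    have hQuu : Q *ᵥ u = u := by rw [hQx u, huu, one_smul]
    refine ⟨u, u ⬝ᵥ (A *ᵥ u), huu, ?_, ?_⟩
    · calc A *ᵥ u = A *ᵥ (Q *ᵥ u) := by rw [hQuu]
        _ = (A * Q) *ᵥ u := by rw [Matrix.mulVec_mulVec]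
        _ = (Q * A) *ᵥ u := by rw [hAQ]
        _ = Q *ᵥ (A *ᵥ u) := by rw [Matrix.mulVec_mulVec]
        _ = (u ⬝ᵥ (A *ᵥ u)) • u := hQx _
    · rw [Ra_pi u huu]
      ext i j
      have hij := congrFun (congrFun h2Q i) j
      simp only [Matrix.smul_apply, Matrix.add_apply, smul_eq_mul] at hij
      rw [hQu i j] at hij
      simp only [Matrix.sub_apply, Matrix.smul_apply, Matrix.of_apply, smul_eq_mul]
      linarith [hij]
  · rintro (rfl | ⟨v, lam, hv, heig, rfl⟩)
    · simp [hA]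
    · exact backward_dir A hA v lam hv heig
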